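/- Let A be an m×n real matrix whose rows all have the same sum, and define f(z) = max_{i,j} |z_i − z_j| for complex vectors z. Then for any z ∈ ℂ^n, f(Az) ≤ (1/2)·f(z)·max_{i,j} Σ_{s=1}^n |a_{is} − a_{js}|. -/

import Mathlib

lemma key15 {n : ℕ} (c : Fin n → ℝ) (hc : ∑ s, c s = 0) (z : Fin n → ℂ) (M : ℝ)
    (hM : ∀ s t : Fin n, ‖z s - z t‖ ≤ M) :
    ‖∑ s, (c s : ℂ) * z s‖ ≤ (1 / 2) * (∑ s, |c s|) * M := by
  set a : Fin n → ℝ := fun s => max (c s) 0 with ha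
  set b : Fin n → ℝ := fun s => max (-c s) 0 with hb
  have hab : ∀ s, a s - b s = c s := by
    intro s
    rcases le_total 0 (c s) with h | h
    · rw [ha, hb]; simp only; rw [max_eq_left h, max_eq_right (neg_nonpos.mpr h)]; ring
    · rw [ha, hb]; simp only; rw [max_eq_right h, max_eq_left (neg_nonneg.mpr h)]; ring
  have habs : ∀ s, |c s| = a s + b s := by
    intro s
    rcases le_total 0 (c s) with h | h
    · rw [abs_of_nonneg h, ha, hb]; simp only
      rw [max_eq_left h, max_eq_right (neg_nonpos.mpr h)]; ring
    · rw [abs_of_nonpos h, ha, hb]; simp only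
      rw [max_eq_right h, max_eq_left (neg_nonneg.mpr h)]; ring
  have ha0 : ∀ s, 0 ≤ a s := fun s => le_max_right _ _
  have hb0 : ∀ s, 0 ≤ b s := fun s => le_max_right _ _
  set P : ℝ := ∑ s, a s with hP
  have hQ : ∑ s, b s = P := by
    have : ∑ s, (a s - b s) = 0 := by simp_rw [hab]; exact hc
    rw [Finset.sum_sub_distrib] at this
    linarith
  have hP0 : 0 ≤ P := Finset.sum_nonneg fun s _ => ha0 s
  have hsumabs : ∑ s, |c s| = 2 * P := by
    simp_rw [habs]; rw [Finset.sum_add_distrib, hQ]; ring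
  have hid : (P : ℂ) * ∑ s, (c s : ℂ) * z s
      = ∑ s, ∑ t, ((a s : ℂ) * (b t : ℂ)) * (z s - z t) := by
    have : ∑ s, ∑ t, ((a s : ℂ) * (b t : ℂ)) * (z s - z t)
        = (∑ t, (b t : ℂ)) * (∑ s, (a s : ℂ) * z s)
          - (∑ s, (a s : ℂ)) * (∑ t, (b t : ℂ) * z t) := by
      simp_rw [mul_sub, Finset.sum_sub_distrib, Finset.sum_mul, Finset.mul_sum]
      congr 1
      · rw [Finset.sum_comm]; congr 1; ext s; congr 1; ext t; ring
      · congr 1; ext s; congr 1; ext t; ring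
    rw [this]
    have h1 : (∑ t, (b t : ℂ)) = (P : ℂ) := by push_cast [← hQ]; rfl
    have h2 : (∑ s, (a s : ℂ)) = (P : ℂ) := by push_cast [hP]; rfl
    rw [h1, h2, ← mul_sub, ← Finset.sum_sub_distrib]
    congr 1
    refine Finset.sum_congr rfl fun s _ => ?_
    rw [← sub_mul]
    congr 1
    push_cast [← hab s]
    ring
  rcases eq_or_lt_of_le hP0 with hP0' | hPpos
  · -- P = 0 so c = 0
    have hceq : ∀ s, c s = 0 := by
      intro s
      have h1 : a s = 0 :=
        le_antisymm (by
          have := Finset.sum_eq_zero_iff_of_nonneg (fun s _ => ha0 s) |>.mp hP0'.symm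
          exact le_of_eq (this s (Finset.mem_univ s))) (ha0 s)
      have h2 : b s = 0 := by
        have hQ0 : ∑ s, b s = 0 := by rw [hQ, ← hP0']
        have := Finset.sum_eq_zero_iff_of_nonneg (fun s _ => hb0 s) |>.mp hQ0
        exact this s (Finset.mem_univ s)
      rw [← hab s, h1, h2]; ring
    simp [hceq, hsumabs, ← hP0']
  · -- P > 0
    have hn : (0 : Fin n → ℝ) ≠ a ∨ True := Or.inr trivial
    have hMnn : 0 ≤ M := by
      have : ∃ s : Fin n, 0 < a s := by
        by_contra h
        push_neg at h
        have : P ≤ 0 := Finset.sum_nonpos fun s _ => h s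
        linarith
      obtain ⟨s, _⟩ := this
      calc (0:ℝ) ≤ ‖z s - z s‖ := norm_nonneg _
        _ ≤ M := hM s s
    have hbound : P * ‖∑ s, (c s : ℂ) * z s‖ ≤ P * P * M := by
      calc P * ‖∑ s, (c s : ℂ) * z s‖
          = ‖(P : ℂ) * ∑ s, (c s : ℂ) * z s‖ := by
            rw [norm_mul, Complex.norm_real, Real.norm_eq_abs, abs_of_nonneg hP0]
        _ = ‖∑ s, ∑ t, ((a s : ℂ) * (b t : ℂ)) * (z s - z t)‖ := by rw [hid]
        _ ≤ ∑ s, ∑ t, ‖((a s : ℂ) * (b t : ℂ)) * (z s - z t)‖ := by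
            refine (norm_sum_le _ _).trans ?_
            exact Finset.sum_le_sum fun s _ => norm_sum_le _ _
        _ ≤ ∑ s, ∑ t, a s * b t * M := by
            refine Finset.sum_le_sum fun s _ => Finset.sum_le_sum fun t _ => ?_
            rw [norm_mul, norm_mul, Complex.norm_real, Complex.norm_real, Real.norm_eq_abs, Real.norm_eq_abs,
              abs_of_nonneg (ha0 s), abs_of_nonneg (hb0 t)]
            exact mul_le_mul_of_nonneg_left (hM s t) (mul_nonneg (ha0 s) (hb0 t))
        _ = P * P * M := by
            simp_rw [mul_assoc, ← Finset.mul_sum, ← Finset.sum_mul, hQ]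
            rfl
    calc ‖∑ s, (c s : ℂ) * z s‖ ≤ P * M := by
          nlinarith [hbound, hPpos]
      _ = (1 / 2) * (∑ s, |c s|) * M := by rw [hsumabs]; ring

/-- Oscillation contraction: if the rows of `A` all have the same sum and
`f(z) = max_{i,j}|z_i - z_j|`, then `f(Az) ≤ (1/2)·f(z)·max_{i,j} Σ_s |a_{is}-a_{js}|`. -/
theorem stmt15 {m n : ℕ} (A : Matrix (Fin m) (Fin n) ℝ)
    (hrow : ∀ i i', ∑ s, A i s = ∑ s, A i' s) (z : Fin n → ℂ) :
    (⨆ p : Fin m × Fin m,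
        ‖(A.map Complex.ofReal).mulVec z p.1 - (A.map Complex.ofReal).mulVec z p.2‖)
      ≤ (1 / 2) * (⨆ p : Fin n × Fin n, ‖z p.1 - z p.2‖) *
          (⨆ p : Fin m × Fin m, ∑ s, |A p.1 s - A p.2 s|) := by
  set Sz : ℝ := ⨆ p : Fin n × Fin n, ‖z p.1 - z p.2‖ with hSz
  set SA : ℝ := ⨆ p : Fin m × Fin m, ∑ s, |A p.1 s - A p.2 s| with hSA
  have hSz0 : 0 ≤ Sz := Real.iSup_nonneg fun p => norm_nonneg _
  have hSA0 : 0 ≤ SA := Real.iSup_nonneg fun p => Finset.sum_nonneg fun s _ => abs_nonneg _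
  refine Real.iSup_le (fun p => ?_) (by positivity)
  obtain ⟨i, i'⟩ := p
  set c : Fin n → ℝ := fun s => A i s - A i' s with hcdef
  have hc : ∑ s, c s = 0 := by
    simp only [hcdef, Finset.sum_sub_distrib]
    rw [hrow i i']; ring
  have hdiff : (A.map Complex.ofReal).mulVec z i - (A.map Complex.ofReal).mulVec z i'
      = ∑ s, (c s : ℂ) * z s := by
    simp only [Matrix.mulVec, dotProduct, Matrix.map_apply, hcdef]
    rw [← Finset.sum_sub_distrib]
    refine Finset.sum_congr rfl fun s _ => ?_
    push_cast
    ring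
  have hM : ∀ s t : Fin n, ‖z s - z t‖ ≤ Sz := by
    intro s t
    rw [hSz]
    exact le_ciSup (Finite.bddAbove_range
      (fun p : Fin n × Fin n => ‖z p.1 - z p.2‖)) ((s, t) : Fin n × Fin n)
  have hkey := key15 c hc z Sz hM
  rw [hdiff]
  refine hkey.trans ?_
  have h1 : ∑ s, |c s| ≤ SA := by
    rw [hSA]
    simp only [hcdef]
    exact le_ciSup (Finite.bddAbove_range
      (fun p : Fin m × Fin m => ∑ s, |A p.1 s - A p.2 s|)) ((i, i') : Fin m × Fin m)
  calc (1/2) * (∑ s, |c s|) * Sz = (1/2) * Sz * (∑ s, |c s|) := by ring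
    _ ≤ (1/2) * Sz * SA := by
        exact mul_le_mul_of_nonneg_left h1 (by positivity)
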